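/- Let D be an integral domain with quotient field K and let Y, Z be nonempty subsets of the Riemann–Zariski space Zar(D) of valuation overrings of D. Then the valuative operations ∧_Y and ∧_Z (given by E ↦ ⋂{EV : V ∈ Y}) are equal if and only if Y^gen = Z^gen, where Y^gen := {V ∈ Zar(D) : V ⊇ V₀ for some V₀ ∈ Y}. -/

import Mathlib

/-- Spans over a smaller valuation subring are contained in spans over a bigger one. -/
lemma valuative_span_mono {K : Type*} [Field K] (V W : ValuationSubring K) (h : V ≤ W)
    (s : Set K) :
    ((Submodule.span V s : Submodule V K) : Set K)
      ⊆ ((Submodule.span W s : Submodule W K) : Set K) := by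
  intro x hx
  induction hx using Submodule.span_induction with
  | mem y hy => exact Submodule.subset_span hy
  | zero => exact (Submodule.span W s).zero_mem
  | add a b _ _ ha hb => exact (Submodule.span W s).add_mem ha hb
  | smul v a _ ha =>
      have : (⟨(v : K), h v.2⟩ : W) • a ∈ Submodule.span W s := Submodule.smul_mem _ _ ha
      exact this

/-- One inclusion of the generalization sets from equality of the valuative operations. -/
lemma valuative_gen_subset (D K : Type*) [CommRing D] [IsDomain D] [Field K]
    [Algebra D K] [IsFractionRing D K]
    (Y Z : Set (ValuationSubring K))
    (hZ : Z.Nonempty)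
    (h : ∀ E : Submodule D K, E ≠ ⊥ →
        (⋂ V ∈ Y, ((Submodule.span V (E : Set K) : Submodule V K) : Set K))
          = ⋂ V ∈ Z, ((Submodule.span V (E : Set K) : Submodule V K) : Set K)) :
    {W : ValuationSubring K | (algebraMap D K).range ≤ W.toSubring ∧ ∃ V₀ ∈ Y, V₀ ≤ W}
      ⊆ {W : ValuationSubring K |
          (algebraMap D K).range ≤ W.toSubring ∧ ∃ V₀ ∈ Z, V₀ ≤ W} := by
  rintro W ⟨hWD, V₀, hV₀Y, hV₀W⟩
  refine ⟨hWD, ?_⟩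
  by_contra hcon
  push_neg at hcon
  -- get an element of some `V ∈ Z` not in `W`
  obtain ⟨V, hVZ⟩ := hZ
  obtain ⟨x, hxV, hxW⟩ := SetLike.not_le_iff_exists.mp (hcon V hVZ)
  have hx1 : ¬ W.valuation x ≤ 1 := fun hle => hxW (W.mem_of_valuation_le_one x hle)
  have hxgt : (1 : _) < W.valuation x := lt_of_not_ge hx1
  have hx0 : x ≠ 0 := by
    rintro rfl
    exact hx1 (by simp)
  -- the maximal ideal of `W` as a `D`-submodule of `K`
  set E : Submodule D K :=
    { carrier := {y : K | W.valuation y < 1}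
      add_mem' := fun {a b} ha hb => lt_of_le_of_lt (W.valuation.map_add a b) (max_lt ha hb)
      zero_mem' := by simp
      smul_mem' := by
        intro d y hy
        have hd : W.valuation (algebraMap D K d) ≤ 1 :=
          (W.valuation_le_one_iff _).2 (hWD ⟨d, rfl⟩)
        have : W.valuation (d • y) = W.valuation (algebraMap D K d) * W.valuation y := by
          rw [Algebra.smul_def, map_mul]
        calc W.valuation (d • y)
            = W.valuation (algebraMap D K d) * W.valuation y := this
          _ ≤ 1 * W.valuation y := mul_le_mul_left hd _
          _ = W.valuation y := one_mul _
          _ < 1 := hy } with hEdef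
  have hmemE : ∀ y : K, y ∈ E ↔ W.valuation y < 1 := fun y => Iff.rfl
  have hEbot : E ≠ ⊥ := by
    rw [Submodule.ne_bot_iff]
    refine ⟨x⁻¹, ?_, inv_ne_zero hx0⟩
    rw [hmemE, map_inv₀, inv_lt_one₀ (zero_lt_one.trans hxgt)]
    exact hxgt
  -- `1` lies in every `span V' E` for `V' ∈ Z`
  have h1Z : (1 : K) ∈ ⋂ V' ∈ Z, ((Submodule.span V' (E : Set K) : Submodule V' K) : Set K) := by
    rw [Set.mem_iInter₂]
    intro V' hV'Z
    obtain ⟨y, hyV', hyW⟩ := SetLike.not_le_iff_exists.mp (hcon V' hV'Z)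
    have hy1 : ¬ W.valuation y ≤ 1 := fun hle => hyW (W.mem_of_valuation_le_one y hle)
    have hygt : (1 : _) < W.valuation y := lt_of_not_ge hy1
    have hy0 : y ≠ 0 := by
      rintro rfl
      exact hy1 (by simp)
    have hinv : y⁻¹ ∈ (E : Set K) := by
      show y⁻¹ ∈ E
      rw [hmemE, map_inv₀, inv_lt_one₀ (zero_lt_one.trans hygt)]
      exact hygt
    have : (⟨y, hyV'⟩ : V') • y⁻¹ ∈ Submodule.span V' (E : Set K) :=
      Submodule.smul_mem _ _ (Submodule.subset_span hinv)
    have heq : (⟨y, hyV'⟩ : V') • y⁻¹ = (1 : K) := by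
      show y * y⁻¹ = 1
      exact mul_inv_cancel₀ hy0
    rwa [heq] at this
  -- hence `1` lies in `span V₀ E ⊆ E`, contradiction
  rw [← h E hEbot, Set.mem_iInter₂] at h1Z
  have h1span : (1 : K) ∈ Submodule.span V₀ (E : Set K) := h1Z V₀ hV₀Y
  have hall : ∀ y ∈ Submodule.span V₀ (E : Set K), W.valuation y < 1 := by
    intro y hy
    induction hy using Submodule.span_induction with
    | mem y hy => exact hy
    | zero => simp
    | add a b _ _ ha hb => exact lt_of_le_of_lt (W.valuation.map_add a b) (max_lt ha hb)
    | smul v a _ ha =>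
        have hv : W.valuation (v : K) ≤ 1 := (W.valuation_le_one_iff _).2 (hV₀W v.2)
        have : W.valuation ((v : K) * a) ≤ W.valuation a := by
          rw [map_mul]
          calc W.valuation (v : K) * W.valuation a
              ≤ 1 * W.valuation a := mul_le_mul_left hv _
            _ = W.valuation a := one_mul _
        exact lt_of_le_of_lt this ha
  have hlt := hall 1 h1span
  simp at hlt

/-- Let `D` be an integral domain with quotient field `K` and `Y, Z` nonempty sets of valuation
overrings of `D` (elements of the Riemann–Zariski space `Zar(D)`). The valuative semistar
operations `∧_Y : E ↦ ⋂ {EV : V ∈ Y}` and `∧_Z` coincide on all nonzero `D`-submodules of `K`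
if and only if `Y^gen = Z^gen`, where
`Y^gen = {V ∈ Zar(D) : V ⊇ V₀ for some V₀ ∈ Y}`. -/
theorem valuative_semistar_eq_iff_gen_eq (D K : Type*) [CommRing D] [IsDomain D] [Field K]
    [Algebra D K] [IsFractionRing D K]
    (Y Z : Set (ValuationSubring K))
    (hYD : ∀ V ∈ Y, (algebraMap D K).range ≤ V.toSubring)
    (hZD : ∀ V ∈ Z, (algebraMap D K).range ≤ V.toSubring)
    (hY : Y.Nonempty) (hZ : Z.Nonempty) :
    (∀ E : Submodule D K, E ≠ ⊥ →
        (⋂ V ∈ Y, ((Submodule.span V (E : Set K) : Submodule V K) : Set K))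
          = ⋂ V ∈ Z, ((Submodule.span V (E : Set K) : Submodule V K) : Set K)) ↔
      {W : ValuationSubring K | (algebraMap D K).range ≤ W.toSubring ∧ ∃ V₀ ∈ Y, V₀ ≤ W}
        = {W : ValuationSubring K |
            (algebraMap D K).range ≤ W.toSubring ∧ ∃ V₀ ∈ Z, V₀ ≤ W} := by
  constructor
  · intro h
    exact Set.Subset.antisymm (valuative_gen_subset D K Y Z hZ h)
      (valuative_gen_subset D K Z Y hY (fun E hE => (h E hE).symm))
  · intro hgen E _hE
    apply Set.Subset.antisymm
    · intro x hx
      rw [Set.mem_iInter₂] at hx ⊢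
      intro V hVZ
      have hVmem : V ∈ {W : ValuationSubring K |
          (algebraMap D K).range ≤ W.toSubring ∧ ∃ V₀ ∈ Y, V₀ ≤ W} := by
        rw [hgen]
        exact ⟨hZD V hVZ, V, hVZ, le_refl V⟩
      obtain ⟨_, V₀, hV₀Y, hle⟩ := hVmem
      exact valuative_span_mono V₀ V hle _ (hx V₀ hV₀Y)
    · intro x hx
      rw [Set.mem_iInter₂] at hx ⊢
      intro V hVY
      have hVmem : V ∈ {W : ValuationSubring K |
          (algebraMap D K).range ≤ W.toSubring ∧ ∃ V₀ ∈ Z, V₀ ≤ W} := by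
        rw [← hgen]
        exact ⟨hYD V hVY, V, hVY, le_refl V⟩
      obtain ⟨_, V₀, hV₀Z, hle⟩ := hVmem
      exact valuative_span_mono V₀ V hle _ (hx V₀ hV₀Z)
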